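/- Let K and H be subgroups of a topological group G, with K strongly neutral and H closed. Then the intersection of the entourages E_V = {(π(x), π(y)) : π(y) ∈ π(Vx)}, over all symmetric open neighborhoods V of the identity, equals the diagonal of the double coset space Z = K\G/H; hence the induced uniformity on Z is separated. -/

import Mathlib

open scoped Pointwise

/-- The quotient topology on the double coset space. -/
instance dosetQuotientTopology {G : Type*} [Group G] [TopologicalSpace G] (K H : Set G) :
    TopologicalSpace (DoubleCoset.Quotient K H) :=
  inferInstanceAs (TopologicalSpace (Quotient (DoubleCoset.setoid K H)))

/-- The entourage `E_V = {(π(x), π(y)) : π(y) ∈ π(Vx)}` on the double coset space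
`Z = K\G/H`, where `π` is the canonical map. -/
def dosetEnt {G : Type*} [Group G] [TopologicalSpace G] (K H : Subgroup G) (V : Set G) :
    Set (DoubleCoset.Quotient (K : Set G) (H : Set G) × DoubleCoset.Quotient (K : Set G) (H : Set G)) :=
  {p | ∃ x : G, p.1 = DoubleCoset.mk K H x ∧ p.2 ∈ DoubleCoset.mk K H '' (V * {x})}

/-- If `K` is strongly neutral, then for any open `U ∋ 1` there is open `V ∋ 1` with
`K * V * K ⊆ U * K`. -/
private lemma aux_neutral {G : Type*} [Group G] [TopologicalSpace G] [IsTopologicalGroup G]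
    (K : Subgroup G)
    (hK : ∀ O : Set G, IsOpen O → (K : Set G) ⊆ O →
      ∃ V : Set G, IsOpen V ∧ (1 : G) ∈ V ∧ (K : Set G) * V ⊆ O)
    (U : Set G) (hU : IsOpen U) (hU1 : (1 : G) ∈ U) :
    ∃ V : Set G, IsOpen V ∧ (1 : G) ∈ V ∧ (K : Set G) * V * K ⊆ U * K := by
  obtain ⟨V, hVo, hV1, hVsub⟩ := hK (U * K) (hU.mul_right) (fun k hk => ⟨1, hU1, k, hk, one_mul k⟩)
  refine ⟨V, hVo, hV1, ?_⟩
  calc (K : Set G) * V * K ⊆ U * K * K := Set.mul_subset_mul_right hVsub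
    _ = U * ((K : Set G) * K) := by rw [mul_assoc]
    _ = U * K := by rw [coe_mul_coe]

/-- If `K` is strongly neutral, `D` closed disjoint from `K`, then some symmetric open
`W ∋ 1` has `K * W * K` disjoint from `D`. -/
private lemma aux_sep {G : Type*} [Group G] [TopologicalSpace G] [IsTopologicalGroup G]
    (K : Subgroup G)
    (hK : ∀ O : Set G, IsOpen O → (K : Set G) ⊆ O →
      ∃ V : Set G, IsOpen V ∧ (1 : G) ∈ V ∧ (K : Set G) * V ⊆ O)
    (D : Set G) (hD : IsClosed D) (hKD : Disjoint (K : Set G) D) :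
    ∃ W : Set G, IsOpen W ∧ (1 : G) ∈ W ∧ W⁻¹ = W ∧
      Disjoint ((K : Set G) * W * K) D := by
  -- Step 1: find open U ∋ 1 with U * K disjoint from D
  have hDinv : IsClosed (D⁻¹ : Set G) := hD.inv
  have hKsub : (K : Set G) ⊆ (D⁻¹)ᶜ := by
    intro k hk hkD
    exact hKD.ne_of_mem (K.inv_mem hk) (Set.mem_inv.mp hkD) rfl
  obtain ⟨V₁, hV₁o, hV₁1, hV₁sub⟩ := hK (D⁻¹)ᶜ hDinv.isOpen_compl hKsub
  have hUK : Disjoint (V₁⁻¹ * (K : Set G)) D := by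
    rw [Set.disjoint_left]
    rintro _ ⟨u, hu, k, hk, rfl⟩ hmem
    have h1 : (u * k)⁻¹ ∈ (K : Set G) * V₁ :=
      ⟨k⁻¹, K.inv_mem hk, u⁻¹, Set.mem_inv.mp hu, (mul_inv_rev u k).symm⟩
    have h2 : (u * k)⁻¹ ∈ D⁻¹ := Set.inv_mem_inv.mpr hmem
    exact hV₁sub h1 h2
  -- Step 2: shrink using neutrality
  obtain ⟨V, hVo, hV1, hVsub⟩ := aux_neutral K hK V₁⁻¹ hV₁o.inv (by simpa using hV₁1)
  refine ⟨V ∩ V⁻¹, hVo.inter hVo.inv, ⟨hV1, by simpa using hV1⟩, by ext; simp [and_comm], ?_⟩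
  exact Set.disjoint_of_subset_left
    ((Set.mul_subset_mul_right (Set.mul_subset_mul_left Set.inter_subset_left)).trans hVsub) hUK

/-- if `K` is strongly neutral and `H` is closed, then the intersection
of the entourages `E_V` over all symmetric open neighborhoods `V` of the identity is
exactly the diagonal of `Z = K\G/H`. -/
theorem stmt_6 {G : Type*} [Group G] [TopologicalSpace G] [IsTopologicalGroup G]
    (K H : Subgroup G)
    (hK : ∀ O : Set G, IsOpen O → (K : Set G) ⊆ O →
      ∃ V : Set G, IsOpen V ∧ (1 : G) ∈ V ∧ (K : Set G) * V ⊆ O)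
    (hH : IsClosed (H : Set G)) :
    ⋂ V ∈ {V : Set G | IsOpen V ∧ (1 : G) ∈ V ∧ V⁻¹ = V}, dosetEnt K H V =
      Set.diagonal (DoubleCoset.Quotient (K : Set G) (H : Set G)) := by

  ext p
  simp only [Set.mem_iInter, Set.mem_setOf_eq, Set.mem_diagonal_iff]
  constructor
  · intro hp
    by_contra hne
    set a := p.1.out with ha
    set b := p.2.out with hb
    have hpa : p.1 = DoubleCoset.mk K H a := (DoubleCoset.out_eq' _ _ p.1).symm
    have hpb : p.2 = DoubleCoset.mk K H b := (DoubleCoset.out_eq' _ _ p.2).symm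
    -- D = b * H * a⁻¹
    set D : Set G := (fun g => b⁻¹ * g * a) ⁻¹' (H : Set G) with hDdef
    have hDclosed : IsClosed D :=
      hH.preimage ((continuous_const.mul continuous_id).mul continuous_const)
    have hKD : Disjoint (K : Set G) D := by
      rw [Set.disjoint_left]
      intro k hk hkD
      apply hne
      rw [hpa, hpb, DoubleCoset.eq]
      exact ⟨k, hk, (b⁻¹ * k * a)⁻¹, H.inv_mem hkD, by group⟩
    obtain ⟨W, hWo, hW1, hWsym, hWdis⟩ := aux_sep K hK D hDclosed hKD
    obtain ⟨x, hx1, y, hy, hx2⟩ := hp W ⟨hWo, hW1, hWsym⟩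
    obtain ⟨w, hw, hy'⟩ : ∃ w ∈ W, y = w * x := by
      obtain ⟨w, hw, x', hx', hprod⟩ := hy
      exact ⟨w, hw, by rw [← hprod, Set.mem_singleton_iff.mp hx']⟩
    subst hy'
    -- p.1 = mk a = mk x : x = k₁ a h₁
    obtain ⟨k₁, hk₁, h₁, hh₁, hxeq⟩ := (DoubleCoset.eq K H a x).mp (hpa ▸ hx1)
    -- mk (w*x) = p.2 = mk b : b = k₂ (w x) h₂
    obtain ⟨k₂, hk₂, h₂, hh₂, hbeq⟩ := (DoubleCoset.eq K H (w * x) b).mp (hx2.trans hpb)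
    -- c := k₂ w k₁ ∈ K W K ∩ D
    have hcmem : k₂ * w * k₁ ∈ (K : Set G) * W * K :=
      Set.mul_mem_mul (Set.mul_mem_mul hk₂ hw) hk₁
    have hcD : k₂ * w * k₁ ∈ D := by
      have : b⁻¹ * (k₂ * w * k₁) * a = (h₁ * h₂)⁻¹ := by
        rw [hbeq, hxeq]; group
      simp only [hDdef, Set.mem_preimage, this, SetLike.mem_coe]
      exact H.inv_mem (H.mul_mem hh₁ hh₂)
    exact Set.disjoint_left.mp hWdis hcmem hcD
  · intro hdiag V hV
    refine ⟨p.1.out, (DoubleCoset.out_eq' _ _ p.1).symm, p.1.out,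
      ⟨1, hV.2.1, p.1.out, rfl, one_mul _⟩, ?_⟩
    rw [← hdiag]
    exact DoubleCoset.out_eq' _ _ p.1
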